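/- Let m ≥ 4 and let V = {S ⊆ {1,…,m} : |S| = 2}. For i ∈ {1,…,m}, let U_i = {S ∈ V : i ∈ S} with characteristic vector u_i ∈ ℝ^V. Let U ⊆ V be nonempty with U ≠ V. Then the characteristic vector of U lies in span_ℝ{u_1, …, u_m} if and only if U = U_j for some j ∈ {1,…,m} or U = V ∖ U_k for some k ∈ {1,…,m}. -/

import Mathlib

/-- let `m ≥ 4` and `V = {S ⊆ {1,…,m} : |S| = 2}` (the vertex set of the
Johnson graph `J(m,2)`).  For `i`, let `U_i = {S ∈ V : i ∈ S}` with characteristic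
vector `u_i`.  For a nonempty `U ⊆ V` with `U ≠ V`, the characteristic vector of `U`
lies in `span_ℝ{u_1, …, u_m}` iff `U = U_j` for some `j` or `U = V ∖ U_k` for some `k`. -/
theorem stmt13 (m : ℕ) (hm : 4 ≤ m)
    (U : Set {S : Finset (Fin m) // S.card = 2}) (hU1 : U ≠ ∅) (hU2 : U ≠ Set.univ) :
    (Set.indicator U (fun _ => (1 : ℝ)) ∈
        Submodule.span ℝ (Set.range fun i : Fin m =>
          (fun S : {S : Finset (Fin m) // S.card = 2} =>
            if i ∈ S.1 then (1 : ℝ) else 0))) ↔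
      ((∃ j : Fin m, U = {S | j ∈ S.1}) ∨ (∃ k : Fin m, U = {S | k ∉ S.1})) := by
  classical
  set v : Fin m → {S : Finset (Fin m) // S.card = 2} → ℝ :=
    fun i : Fin m => (fun S : {S : Finset (Fin m) // S.card = 2} =>
      if i ∈ S.1 then (1 : ℝ) else 0) with hv
  constructor
  · intro hmem
    rw [Submodule.mem_span_range_iff_exists_fun] at hmem
    obtain ⟨c, hc⟩ := hmem
    have hval : ∀ S : {S : Finset (Fin m) // S.card = 2},
        (∑ t ∈ S.1, c t) = if S ∈ U then (1 : ℝ) else 0 := by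
      intro S
      have h := congrFun hc S
      simp only [Finset.sum_apply, Pi.smul_apply, smul_eq_mul, hv,
        Set.indicator_apply] at h
      rw [← h]
      simp [mul_ite, Finset.sum_ite_mem]
    have hpair : ∀ a b : Fin m, a ≠ b → c a + c b = 0 ∨ c a + c b = 1 := by
      intro a b hab
      have h := hval ⟨{a, b}, Finset.card_pair hab⟩
      rw [Finset.sum_pair hab] at h
      split_ifs at h
      · right; exact h
      · left; exact h
    have hexists : ∀ i : Fin m, ∃ a b : Fin m, a ≠ b ∧ a ≠ i ∧ b ≠ i := by
      intro i
      have hcard : 1 < (Finset.univ.erase i).card := by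
        rw [Finset.card_erase_of_mem (Finset.mem_univ i), Finset.card_univ,
          Fintype.card_fin]
        omega
      obtain ⟨a, ha, b, hb, hab⟩ := Finset.one_lt_card.mp hcard
      exact ⟨a, b, hab, Finset.ne_of_mem_erase ha, Finset.ne_of_mem_erase hb⟩
    have hrange : ∀ i, c i = -(1/2) ∨ c i = 0 ∨ c i = 1/2 ∨ c i = 1 := by
      intro i
      obtain ⟨a, b, hab, hai, hbi⟩ := hexists i
      have hx := hpair i a (Ne.symm hai)
      have hy := hpair i b (Ne.symm hbi)
      have hz := hpair a b hab
      rcases hx with hx | hx <;> rcases hy with hy | hy <;> rcases hz with hz | hz <;>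
        first
          | (left; linarith)
          | (right; left; linarith)
          | (right; right; left; linarith)
          | (right; right; right; linarith)
    by_cases hh : ∃ i, c i = 1/2 ∨ c i = -(1/2)
    · obtain ⟨i0, hi0⟩ := hh
      have hall : ∀ j, c j = 1/2 ∨ c j = -(1/2) := by
        intro j
        by_cases hji : j = i0
        · subst hji; exact hi0
        · have hp := hpair j i0 hji
          have hr := hrange j
          rcases hi0 with h | h <;>
            rcases hr with h' | h' | h' | h' <;>
            rcases hp with hp | hp <;>
            first
              | (left; linarith)
              | (right; linarith)
      have huniq : ∀ j k : Fin m, j ≠ k → c j = -(1/2) → c k = -(1/2) → False := by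
        intro j k hjk hj hk
        rcases hpair j k hjk with h | h <;> linarith
      by_cases hneg : ∃ k, c k = -(1/2)
      · obtain ⟨k, hk⟩ := hneg
        refine Or.inr ⟨k, ?_⟩
        ext S
        have h := hval S
        obtain ⟨a, b, hab, hS⟩ := Finset.card_eq_two.mp S.2
        rw [hS, Finset.sum_pair hab] at h
        have hmemS : ∀ t : Fin m, t ∈ S.1 ↔ t = a ∨ t = b := by
          intro t; rw [hS]; simp
        simp only [Set.mem_setOf_eq]
        have hpos : ∀ t : Fin m, t ≠ k → c t = 1/2 := by
          intro t ht
          rcases hall t with h' | h'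
          · exact h'
          · exact absurd (huniq t k ht h' hk) (by simp)
        by_cases hka : a = k
        · have hbk : b ≠ k := fun hbk => hab (hka.trans hbk.symm)
          have : c a + c b = 0 := by rw [hka, hk, hpos b hbk]; ring
          rw [this] at h
          constructor
          · intro hSU
            simp [hSU] at h
          · intro hkS
            exact absurd ((hmemS k).mpr (Or.inl hka.symm)) hkS
        · by_cases hkb : b = k
          · have : c a + c b = 0 := by rw [hkb, hk, hpos a hka]; ring
            rw [this] at h
            constructor
            · intro hSU
              simp [hSU] at h
            · intro hkS
              exact absurd ((hmemS k).mpr (Or.inr hkb.symm)) hkS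
          · have : c a + c b = 1 := by rw [hpos a hka, hpos b hkb]; ring
            rw [this] at h
            constructor
            · intro _ hkS
              rcases (hmemS k).mp hkS with h' | h'
              · exact hka h'.symm
              · exact hkb h'.symm
            · intro _
              by_contra hSU
              simp [hSU] at h
      · push_neg at hneg
        exfalso
        apply hU2
        rw [Set.eq_univ_iff_forall]
        intro S
        have h := hval S
        obtain ⟨a, b, hab, hS⟩ := Finset.card_eq_two.mp S.2
        rw [hS, Finset.sum_pair hab] at h
        have ha2 : c a = 1/2 := (hall a).resolve_right (hneg a)
        have hb2 : c b = 1/2 := (hall b).resolve_right (hneg b)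
        rw [ha2, hb2] at h
        by_contra hSU
        simp [hSU] at h
    · push_neg at hh
      have h01 : ∀ i, c i = 0 ∨ c i = 1 := by
        intro i
        rcases hrange i with h | h | h | h
        · exact absurd h (hh i).2
        · exact Or.inl h
        · exact absurd h (hh i).1
        · exact Or.inr h
      by_cases hone : ∃ j, c j = 1
      · obtain ⟨j, hj⟩ := hone
        have hzero : ∀ t : Fin m, t ≠ j → c t = 0 := by
          intro t ht
          rcases h01 t with h' | h'
          · exact h'
          · exfalso
            rcases hpair t j ht with h | h <;> linarith
        refine Or.inl ⟨j, ?_⟩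
        ext S
        have h := hval S
        obtain ⟨a, b, hab, hS⟩ := Finset.card_eq_two.mp S.2
        rw [hS, Finset.sum_pair hab] at h
        have hmemS : ∀ t : Fin m, t ∈ S.1 ↔ t = a ∨ t = b := by
          intro t; rw [hS]; simp
        simp only [Set.mem_setOf_eq]
        by_cases hja : a = j
        · have hbj : b ≠ j := fun hbj => hab (hja.trans hbj.symm)
          have : c a + c b = 1 := by rw [hja, hj, hzero b hbj]; ring
          rw [this] at h
          constructor
          · intro _
            exact (hmemS j).mpr (Or.inl hja.symm)
          · intro _
            by_contra hSU
            simp [hSU] at h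
        · by_cases hjb : b = j
          · have : c a + c b = 1 := by rw [hjb, hj, hzero a hja]; ring
            rw [this] at h
            constructor
            · intro _
              exact (hmemS j).mpr (Or.inr hjb.symm)
            · intro _
              by_contra hSU
              simp [hSU] at h
          · have : c a + c b = 0 := by rw [hzero a hja, hzero b hjb]; ring
            rw [this] at h
            constructor
            · intro hSU
              simp [hSU] at h
            · intro hjS
              rcases (hmemS j).mp hjS with h' | h'
              · exact absurd h'.symm hja
              · exact absurd h'.symm hjb
      · push_neg at hone
        exfalso
        apply hU1
        rw [Set.eq_empty_iff_forall_notMem]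
        intro S hSU
        have h := hval S
        obtain ⟨a, b, hab, hS⟩ := Finset.card_eq_two.mp S.2
        rw [hS, Finset.sum_pair hab] at h
        have ha0 : c a = 0 := (h01 a).resolve_right (hone a)
        have hb0 : c b = 0 := (h01 b).resolve_right (hone b)
        rw [ha0, hb0] at h
        simp [hSU] at h
  · rintro (⟨j, rfl⟩ | ⟨k, rfl⟩)
    · have heq : Set.indicator {S : {S : Finset (Fin m) // S.card = 2} | j ∈ S.1}
          (fun _ => (1 : ℝ)) = v j := by
        funext S
        simp [Set.indicator_apply, hv, Set.mem_setOf_eq]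
      rw [heq]
      exact Submodule.subset_span ⟨j, rfl⟩
    · have hsum : (∑ i, v i) = fun _ => (2 : ℝ) := by
        funext S
        simp only [Finset.sum_apply, hv]
        rw [Finset.sum_ite_mem, Finset.univ_inter, Finset.sum_const, S.2]
        norm_num
      have heq : Set.indicator {S : {S : Finset (Fin m) // S.card = 2} | k ∉ S.1}
          (fun _ => (1 : ℝ)) = (1/2 : ℝ) • (∑ i, v i) - v k := by
        funext S
        have h2 : (∑ i, v i) S = 2 := congrFun hsum S
        by_cases h : k ∈ S.1 <;>
          simp [Set.indicator_apply, hv, h2, h, Set.mem_setOf_eq, S.2]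
      rw [heq]
      refine Submodule.sub_mem _ (Submodule.smul_mem _ _ (Submodule.sum_mem _ ?_))
        (Submodule.subset_span ⟨k, rfl⟩)
      intro i _
      exact Submodule.subset_span ⟨i, rfl⟩
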